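/- arXiv:1506.02695 — 3 statements merged into one kernel-verified Lean document; each statement's English description precedes it below -/
import Mathlib

section
/- Let G be a finite group with nontrivial proper normal subgroup H. Then for every n ≥ 1, D(G^n) ≤ D(G^n/H^n) + (1 + |G| · D(G^n/H^n)) · D(H^n). -/
open Subgroup

/-- Minimal length of a word over `X` (positive letters only) representing `g`. -/
noncomputable def wLen {G : Type*} [Group G] (X : Set G) (g : G) : ℕ :=
  sInf {n | ∃ l : List G, (∀ x ∈ l, x ∈ X) ∧ l.length = n ∧ l.prod = g}

/-- Minimal length of a word over `X ∪ X⁻¹` representing `g`. -/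
noncomputable def sLen {G : Type*} [Group G] (X : Set G) (g : G) : ℕ :=
  sInf {n | ∃ l : List G, (∀ x ∈ l, x ∈ X ∨ x⁻¹ ∈ X) ∧ l.length = n ∧ l.prod = g}

/-- Diameter of `G` with respect to `X` (positive words). -/
noncomputable def diamW (G : Type*) [Group G] (X : Set G) : ℕ :=
  sSup (Set.range (wLen X))

/-- Symmetric diameter of `G` with respect to `X`. -/
noncomputable def diamS (G : Type*) [Group G] (X : Set G) : ℕ :=
  sSup (Set.range (sLen X))

/-- Maximum diameter over all generating sets. -/
noncomputable def DW (G : Type*) [Group G] : ℕ :=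
  sSup {d | ∃ X : Set G, Subgroup.closure X = ⊤ ∧ d = diamW G X}

/-- Maximum symmetric diameter over all generating sets. -/
noncomputable def DS (G : Type*) [Group G] : ℕ :=
  sSup {d | ∃ X : Set G, Subgroup.closure X = ⊤ ∧ d = diamS G X}

/-- Minimal size of a generating set of `G`. -/
noncomputable def rk (G : Type*) [Group G] : ℕ :=
  sInf {n | ∃ S : Finset G, S.card = n ∧ Subgroup.closure (S : Set G) = ⊤}

lemma prod_flatten_replicate {K : Type*} [Group K] (l : List K) (m : ℕ) :
    ((List.replicate m l).flatten).prod = l.prod ^ m := by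
  induction m with
  | zero => simp
  | succ m ih =>
    rw [List.replicate_succ, List.flatten_cons, List.prod_append, ih, pow_succ']

lemma exists_word {K : Type*} [Group K] [Finite K] {X : Set K}
    (hX : Subgroup.closure X = ⊤) (g : K) :
    ∃ l : List K, (∀ x ∈ l, x ∈ X) ∧ l.prod = g := by
  have hg : g ∈ Subgroup.closure X := hX ▸ Subgroup.mem_top g
  induction hg using Subgroup.closure_induction with
  | mem x hx => exact ⟨[x], by simp [hx]⟩
  | one => exact ⟨[], by simp, by simp⟩
  | mul a b _ _ ha hb =>
    obtain ⟨la, hla, hpa⟩ := ha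
    obtain ⟨lb, hlb, hpb⟩ := hb
    refine ⟨la ++ lb, ?_, by simp [hpa, hpb]⟩
    intro x hx
    rcases List.mem_append.1 hx with h | h
    · exact hla x h
    · exact hlb x h
  | inv a _ ha =>
    obtain ⟨l, hl, hp⟩ := ha
    refine ⟨(List.replicate (orderOf a - 1) l).flatten, ?_, ?_⟩
    · intro x hx
      simp only [List.mem_flatten, List.mem_replicate] at hx
      obtain ⟨t, ⟨-, rfl⟩, hxt⟩ := hx
      exact hl x hxt
    · rw [prod_flatten_replicate, hp]
      apply eq_inv_of_mul_eq_one_left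
      rw [← pow_succ, Nat.sub_add_cancel (orderOf_pos a)]
      exact pow_orderOf_eq_one a

lemma wLen_le_DW {K : Type*} [Group K] [Finite K] {X : Set K}
    (hX : Subgroup.closure X = ⊤) (g : K) : wLen X g ≤ DW K := by
  have h1 : wLen X g ≤ diamW K X :=
    le_csSup (Set.finite_range _).bddAbove (Set.mem_range_self g)
  refine h1.trans (le_csSup ?_ ⟨X, hX, rfl⟩)
  have hsub : {d | ∃ X : Set K, Subgroup.closure X = ⊤ ∧ d = diamW K X}
      ⊆ Set.range (diamW K) := by
    rintro d ⟨X, -, rfl⟩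
    exact ⟨X, rfl⟩
  exact ((Set.finite_range (diamW K)).subset hsub).bddAbove

lemma exists_word_len {K : Type*} [Group K] [Finite K] {X : Set K}
    (hX : Subgroup.closure X = ⊤) (g : K) :
    ∃ l : List K, (∀ x ∈ l, x ∈ X) ∧ l.length ≤ DW K ∧ l.prod = g := by
  have hne : {n | ∃ l : List K, (∀ x ∈ l, x ∈ X) ∧ l.length = n ∧ l.prod = g}.Nonempty := by
    obtain ⟨l, h1, h2⟩ := exists_word hX g
    exact ⟨l.length, l, h1, rfl, h2⟩
  obtain ⟨l, h1, h2, h3⟩ := Nat.sInf_mem hne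
  refine ⟨l, h1, ?_, h3⟩
  rw [h2]
  exact wLen_le_DW hX g

lemma exists_lift_list {K Q : Type*} [Group K] [Group Q] (f : K →* Q) {X : Set K}
    (lb : List Q) (h : ∀ y ∈ lb, y ∈ f '' X) :
    ∃ l : List K, (∀ x ∈ l, x ∈ X) ∧ l.map f = lb := by
  induction lb with
  | nil => exact ⟨[], by simp, by simp⟩
  | cons y t ih =>
    obtain ⟨x, hx, hfx⟩ := h y List.mem_cons_self
    obtain ⟨lt, h1, h2⟩ := ih (fun z hz => h z (List.mem_cons_of_mem _ hz))
    refine ⟨x :: lt, ?_, by simp [h2, hfx]⟩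
    intro z hz
    rcases List.mem_cons.1 hz with rfl | hz
    · exact hx
    · exact h1 z hz

lemma key_lemma {K : Type*} [Group K] [Finite K] (N : Subgroup K) [N.Normal]
    {c : ℕ} (hc : 1 ≤ c) (horder : ∀ t : K, orderOf t ≤ c) :
    DW K ≤ DW (K ⧸ N) + (1 + c * DW (K ⧸ N)) * DW ↥N := by
  set D₁ := DW (K ⧸ N) with hD₁
  set D₂ := DW (↥N) with hD₂
  have main : ∀ (X : Set K), Subgroup.closure X = ⊤ → ∀ g : K,
      wLen X g ≤ D₁ + (1 + c * D₁) * D₂ := by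
    intro X hX g
    -- the quotient generating set
    have hXQ : Subgroup.closure ((QuotientGroup.mk' N) '' X) = ⊤ := by
      rw [← MonoidHom.map_closure, hX]
      rw [← MonoidHom.range_eq_map]
      exact MonoidHom.range_eq_top_of_surjective _ (QuotientGroup.mk'_surjective N)
    -- transversal
    have hT : ∀ q : K ⧸ N, ∃ l : List K, (∀ x ∈ l, x ∈ X) ∧ l.length ≤ D₁ ∧
        (QuotientGroup.mk' N) l.prod = q ∧ (q = 1 → l = []) := by
      intro q
      by_cases hq : q = 1
      · exact ⟨[], by simp, by simp, by simp [hq], fun _ => rfl⟩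
      · obtain ⟨lb, hl1, hl2, hl3⟩ := exists_word_len hXQ q
        obtain ⟨l, h1, h2⟩ := exists_lift_list (QuotientGroup.mk' N) lb hl1
        refine ⟨l, h1, ?_, ?_, fun h => absurd h hq⟩
        · have : l.length = lb.length := by rw [← h2, List.length_map]
          omega
        · rw [← hl3, ← h2, List.prod_hom]
    choose T hT1 hT2 hT3 hT4 using hT
    set Y : Set ↥N :=
      {y | ∃ l : List K, (∀ x ∈ l, x ∈ X) ∧ l.length ≤ 1 + c * D₁ ∧ l.prod = (y : K)} with hY
    -- telescoping claim
    have claimA : ∀ l : List K, (∀ x ∈ l, x ∈ X) →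
        ∃ ys : List ↥N, (∀ y ∈ ys, y ∈ Y) ∧
          (ys.map (Subtype.val)).prod * (T ((QuotientGroup.mk' N) l.prod)).prod = l.prod := by
      intro l
      induction l using List.reverseRecOn with
      | nil =>
        intro _
        refine ⟨[], by simp, ?_⟩
        have h1 : (QuotientGroup.mk' N) ([] : List K).prod = 1 := by simp
        rw [h1, hT4 1 rfl]
        simp
      | append_singleton l x ih =>
        intro hlx
        obtain ⟨ys, hys, hprod⟩ := ih (fun z hz => hlx z (List.mem_append_left _ hz))
        have hxX : x ∈ X := hlx x (by simp)
        set q₁ := (QuotientGroup.mk' N) l.prod with hq₁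
        set q₂ := (QuotientGroup.mk' N) (l.prod * x) with hq₂
        set s₁ := (T q₁).prod with hs₁d
        set s₂ := (T q₂).prod with hs₂d
        have hs₁ : (QuotientGroup.mk' N) s₁ = q₁ := hT3 q₁
        have hs₂ : (QuotientGroup.mk' N) s₂ = q₂ := hT3 q₂
        have hyN : s₁ * x * s₂⁻¹ ∈ N := by
          rw [← QuotientGroup.eq_one_iff]
          show (QuotientGroup.mk' N) (s₁ * x * s₂⁻¹) = 1
          rw [map_mul, map_mul, map_inv, hs₁, hs₂, hq₂, map_mul, ← hq₁]
          group
        have hs₂inv : s₂ ^ (orderOf s₂ - 1) = s₂⁻¹ := by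
          apply eq_inv_of_mul_eq_one_left
          rw [← pow_succ, Nat.sub_add_cancel (orderOf_pos s₂)]
          exact pow_orderOf_eq_one s₂
        have hyY : (⟨s₁ * x * s₂⁻¹, hyN⟩ : ↥N) ∈ Y := by
          refine ⟨T q₁ ++ [x] ++ (List.replicate (orderOf s₂ - 1) (T q₂)).flatten, ?_, ?_, ?_⟩
          · intro z hz
            simp only [List.mem_append, List.mem_singleton, List.mem_flatten,
              List.mem_replicate] at hz
            rcases hz with (hz | rfl) | ⟨t, ⟨-, rfl⟩, hzt⟩
            · exact hT1 q₁ z hz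
            · exact hxX
            · exact hT1 q₂ z hzt
          · have l1 : (T q₁).length ≤ D₁ := hT2 q₁
            have l2 : (T q₂).length ≤ D₁ := hT2 q₂
            have hord : orderOf s₂ - 1 ≤ c - 1 := by
              have := horder s₂; omega
            have hlen : ((List.replicate (orderOf s₂ - 1) (T q₂)).flatten).length
                = (orderOf s₂ - 1) * (T q₂).length := by
              simp [List.length_flatten, List.map_replicate, List.sum_replicate, smul_eq_mul]
            simp only [List.length_append, List.length_singleton, hlen]
            have h3 : (orderOf s₂ - 1) * (T q₂).length ≤ (c - 1) * D₁ :=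
              Nat.mul_le_mul hord l2
            have h4 : (c - 1) * D₁ + D₁ = c * D₁ := by
              conv_rhs => rw [← Nat.sub_add_cancel hc]
              rw [Nat.add_mul, Nat.one_mul]
            omega
          · rw [List.prod_append, List.prod_append, prod_flatten_replicate,
              List.prod_singleton, hs₂inv]
        refine ⟨ys ++ [⟨s₁ * x * s₂⁻¹, hyN⟩], ?_, ?_⟩
        · intro y hy
          rcases List.mem_append.1 hy with h | h
          · exact hys y h
          · rw [List.mem_singleton] at h
            rw [h]; exact hyY
        · have hmkq : (QuotientGroup.mk' N) (l ++ [x]).prod = q₂ := by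
            rw [List.prod_append, List.prod_singleton]
          rw [hmkq, List.map_append, List.prod_append, List.map_singleton,
            List.prod_singleton, List.prod_append, List.prod_singleton]
          show (ys.map Subtype.val).prod * (s₁ * x * s₂⁻¹) * s₂ = l.prod * x
          rw [← hprod]
          group
    -- Y generates N
    have hYtop : Subgroup.closure Y = ⊤ := by
      rw [eq_top_iff]
      rintro h -
      obtain ⟨l, hl, hlp⟩ := exists_word hX (h : K)
      obtain ⟨ys, hys, hprod⟩ := claimA l hl
      have hq : (QuotientGroup.mk' N) l.prod = 1 := by
        rw [hlp]; exact (QuotientGroup.eq_one_iff _).2 h.2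
      rw [hq, hT4 1 rfl, List.prod_nil, mul_one, hlp] at hprod
      have hh : h = ys.prod := by
        apply Subtype.ext
        rw [← hprod]
        exact (SubmonoidClass.coe_list_prod ys).symm
      rw [hh]
      exact list_prod_mem (fun y hy => subset_closure (hys y hy))
    -- every element of N has a short word over X
    have hNword : ∀ h : ↥N, ∃ L : List K, (∀ x ∈ L, x ∈ X) ∧
        L.length ≤ (1 + c * D₁) * D₂ ∧ L.prod = (h : K) := by
      intro h
      obtain ⟨ys, hys1, hys2, hys3⟩ := exists_word_len hYtop h
      have expand : ∀ zs : List ↥N, (∀ y ∈ zs, y ∈ Y) →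
          ∃ L : List K, (∀ x ∈ L, x ∈ X) ∧ L.length ≤ (1 + c * D₁) * zs.length ∧
            L.prod = ((zs.map Subtype.val).prod) := by
        intro zs
        induction zs with
        | nil => exact fun _ => ⟨[], by simp, by simp, by simp⟩
        | cons y t ih =>
          intro hmem
          obtain ⟨ly, hy1, hy2, hy3⟩ := hmem y List.mem_cons_self
          obtain ⟨L, h1, h2, h3⟩ := ih (fun z hz => hmem z (List.mem_cons_of_mem _ hz))
          refine ⟨ly ++ L, ?_, ?_, ?_⟩
          · intro z hz
            rcases List.mem_append.1 hz with hz | hz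
            · exact hy1 z hz
            · exact h1 z hz
          · rw [List.length_append, List.length_cons, Nat.mul_succ]
            omega
          · rw [List.prod_append, List.map_cons, List.prod_cons, hy3, h3]
      obtain ⟨L, h1, h2, h3⟩ := expand ys hys1
      refine ⟨L, h1, ?_, ?_⟩
      · calc L.length ≤ (1 + c * D₁) * ys.length := h2
          _ ≤ (1 + c * D₁) * D₂ := Nat.mul_le_mul_left _ hys2
      · rw [h3, ← hys3]
        exact (SubmonoidClass.coe_list_prod ys).symm
    -- conclude for g
    set q := (QuotientGroup.mk' N) g with hqdef
    have hmem : (T q).prod⁻¹ * g ∈ N := by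
      have h1 : (QuotientGroup.mk' N) (T q).prod = (QuotientGroup.mk' N) g := hT3 q
      exact QuotientGroup.eq.1 h1
    obtain ⟨L, hL1, hL2, hL3⟩ := hNword ⟨(T q).prod⁻¹ * g, hmem⟩
    have hfin : (T q ++ L).prod = g := by
      rw [List.prod_append, hL3]
      group
    have hlenfin : (T q ++ L).length ≤ D₁ + (1 + c * D₁) * D₂ := by
      rw [List.length_append]
      have := hT2 q
      omega
    have hWmem : wLen X g ≤ (T q ++ L).length := by
      apply Nat.sInf_le
      refine ⟨T q ++ L, ?_, rfl, hfin⟩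
      intro z hz
      rcases List.mem_append.1 hz with hz | hz
      · exact hT1 q z hz
      · exact hL1 z hz
    exact hWmem.trans hlenfin
  -- from the per-element bound to DW
  refine csSup_le ⟨diamW K Set.univ, Set.univ, ?_, rfl⟩ ?_
  · exact Subgroup.closure_univ
  rintro d ⟨X, hX, rfl⟩
  refine csSup_le ⟨wLen X 1, 1, rfl⟩ ?_
  rintro m ⟨g, rfl⟩
  exact main X hX g

theorem stmt16 {G : Type*} [Group G] [Finite G] (H : Subgroup G) [H.Normal]
    (hbot : H ≠ ⊥) (htop : H ≠ ⊤) (n : ℕ) (hn : 1 ≤ n)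
    [(Subgroup.pi Set.univ fun _ : Fin n => H).Normal] :
    DW (Fin n → G) ≤
      DW ((Fin n → G) ⧸ Subgroup.pi Set.univ fun _ : Fin n => H) +
        (1 + Nat.card G * DW ((Fin n → G) ⧸ Subgroup.pi Set.univ fun _ : Fin n => H)) *
          DW ↥(Subgroup.pi Set.univ fun _ : Fin n => H) := by
  have hc : 1 ≤ Nat.card G := Nat.card_pos
  have horder : ∀ t : Fin n → G, orderOf t ≤ Nat.card G := by
    intro t
    have hpow : t ^ Nat.card G = 1 := by
      funext i
      simpa using pow_card_eq_one' (G := G) (g := t i)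
    exact Nat.le_of_dvd Nat.card_pos (orderOf_dvd_of_pow_eq_one hpow)
  exact key_lemma (Subgroup.pi Set.univ fun _ : Fin n => H) hc horder
end

section
/- Let G be a finite solvable group of derived length l. Then for all n ≥ 1, D^s(G^n) ≤ 4^{l−1} · n^l · |G|, where D^s denotes the maximum symmetric diameter over all generating sets. -/
open Subgroup
open scoped commutatorElement

section api
variable {G : Type*} [Group G] {X : Set G} {g h : G}

def isWord (X : Set G) (w : List G) : Prop := ∀ x ∈ w, x ∈ X ∨ x⁻¹ ∈ X

lemma sLen_le_of_word {w : List G} (hw : isWord X w) (hp : w.prod = g) :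
    sLen X g ≤ w.length := Nat.sInf_le ⟨w, hw, rfl, hp⟩

lemma exists_word_of_mem_closure (hg : g ∈ closure X) :
    ∃ w : List G, isWord X w ∧ w.prod = g := by
  have h1 : g ∈ Submonoid.closure (X ∪ X⁻¹) := by
    rw [← Subgroup.closure_toSubmonoid] at *; exact hg
  obtain ⟨w, hw, hp⟩ := Submonoid.exists_list_of_mem_closure h1
  exact ⟨w, fun x hx => by
    rcases hw x hx with h | h
    · exact Or.inl h
    · exact Or.inr (Set.mem_inv.mp h), hp⟩

lemma exists_word_sLen (hg : g ∈ closure X) :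
    ∃ w : List G, isWord X w ∧ w.prod = g ∧ w.length = sLen X g := by
  have hne : {n | ∃ l : List G, (∀ x ∈ l, x ∈ X ∨ x⁻¹ ∈ X) ∧ l.length = n ∧ l.prod = g}.Nonempty := by
    obtain ⟨w, hw, hp⟩ := exists_word_of_mem_closure hg
    exact ⟨w.length, w, hw, rfl, hp⟩
  obtain ⟨w, hw, hl, hp⟩ := Nat.sInf_mem hne
  exact ⟨w, hw, hp, hl⟩

lemma isWord_inv_reverse {w : List G} (hw : isWord X w) :
    isWord X (w.map (·⁻¹)).reverse := by
  intro x hx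
  simp only [List.mem_reverse, List.mem_map] at hx
  obtain ⟨y, hy, rfl⟩ := hx
  rcases hw y hy with h | h
  · exact Or.inr (by simpa using h)
  · exact Or.inl h

lemma sLen_inv_le (hg : g ∈ closure X) : sLen X g⁻¹ ≤ sLen X g := by
  obtain ⟨w, hw, hp, hl⟩ := exists_word_sLen hg
  calc sLen X g⁻¹ ≤ (w.map (·⁻¹)).reverse.length :=
        sLen_le_of_word (isWord_inv_reverse hw) (by rw [← List.prod_inv_reverse, hp])
    _ = sLen X g := by simpa using hl.symm ▸ (by simp)

lemma sLen_mul_le (hg : g ∈ closure X) (hh : h ∈ closure X) :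
    sLen X (g * h) ≤ sLen X g + sLen X h := by
  obtain ⟨w1, hw1, hp1, hl1⟩ := exists_word_sLen hg
  obtain ⟨w2, hw2, hp2, hl2⟩ := exists_word_sLen hh
  calc sLen X (g * h) ≤ (w1 ++ w2).length := by
        refine sLen_le_of_word (fun x hx => ?_) (by rw [List.prod_append, hp1, hp2])
        rcases List.mem_append.mp hx with h | h
        · exact hw1 x h
        · exact hw2 x h
    _ = sLen X g + sLen X h := by simp [hl1, hl2]

lemma sLen_one : sLen X (1 : G) = 0 :=
  Nat.le_zero.mp (sLen_le_of_word (w := []) (by simp [isWord]) (by simp))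

lemma sLen_le_diamS [Finite G] : sLen X g ≤ diamS G X :=
  le_csSup ((Set.finite_range _).bddAbove) ⟨g, rfl⟩

lemma diamS_le {c : ℕ} (h : ∀ g : G, sLen X g ≤ c) : diamS G X ≤ c :=
  csSup_le' (by rintro d ⟨g, rfl⟩; exact h g)

lemma DS_le {c : ℕ} (h : ∀ X : Set G, closure X = ⊤ → diamS G X ≤ c) : DS G ≤ c :=
  csSup_le' (by rintro d ⟨X, hX, rfl⟩; exact h X hX)

end api

-- numeric lemma: k^(j-1) ≤ j^k for 2 ≤ j ≤ k
lemma numkey_aux {k j : ℕ} (hj : 1 ≤ j) (hjk : j ≤ k) :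
    (k+1)^(j-1) * (k - j + 1) ≤ k^j := by
  induction j with
  | zero => omega
  | succ m ih =>
    rcases Nat.eq_or_lt_of_le hj with h1 | h1
    · have : m = 0 := by omega
      subst this
      show (k+1)^0 * (k - 1 + 1) ≤ k^1
      simp only [pow_zero, one_mul, pow_one]
      omega
    · -- m ≥ 1, m+1 ≤ k
      have hm : 1 ≤ m := by omega
      have hmk : m ≤ k := by omega
      have ihm := ih hm hmk
      have key : (k+1) * (k - m) ≤ k * (k - m + 1) := by
        nlinarith [Nat.sub_add_cancel hmk]
      have hmrw : (k+1)^m = (k+1)^(m-1) * (k+1) := by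
        rw [← pow_succ]; congr 1; omega
      calc (k+1)^(m+1-1) * (k - (m+1) + 1)
          = (k+1)^(m-1) * ((k+1) * (k - m)) := by
            rw [show m+1-1 = m from rfl, show k - (m+1) + 1 = k - m by omega, hmrw]; ring
        _ ≤ (k+1)^(m-1) * (k * (k - m + 1)) := Nat.mul_le_mul_left _ key
        _ = ((k+1)^(m-1) * (k - m + 1)) * k := by ring
        _ ≤ k^m * k := Nat.mul_le_mul_right k ihm
        _ = k^(m+1) := by rw [pow_succ]

lemma numkey {k j : ℕ} (hj : 2 ≤ j) (hjk : j ≤ k) : k^(j-1) ≤ j^k := by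
  -- step lemma: for k ≥ j, (k+1)^(j-1) ≤ j * k^(j-1)
  have step : ∀ k', j ≤ k' → (k'+1)^(j-1) ≤ j * k'^(j-1) := by
    intro k' hk'
    have h1 := numkey_aux (by omega : 1 ≤ j) hk'
    have h2 : k' ≤ j * (k' - j + 1) := by nlinarith [Nat.sub_add_cancel hk']
    have h3 : (k'+1)^(j-1) * (k' - j + 1) ≤ (j * k'^(j-1)) * (k' - j + 1) := by
      calc (k'+1)^(j-1) * (k' - j + 1) ≤ k'^j := h1
        _ = k'^(j-1) * k' := by rw [← pow_succ]; congr 1; omega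
        _ ≤ k'^(j-1) * (j * (k' - j + 1)) := Nat.mul_le_mul_left _ h2
        _ = (j * k'^(j-1)) * (k' - j + 1) := by ring
    exact Nat.le_of_mul_le_mul_right h3 (by omega)
  -- induct on k from j
  induction k with
  | zero => omega
  | succ m ih =>
    rcases Nat.lt_or_ge m j with h | h
    · -- k = m+1 = j
      have : j = m + 1 := by omega
      subst this
      exact Nat.pow_le_pow_right (by omega) (by omega)
    · calc (m+1)^(j-1) ≤ j * m^(j-1) := step m h
        _ ≤ j * j^m := Nat.mul_le_mul_left _ (ih (by omega))
        _ = j^(m+1) := by rw [← pow_succ']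

section lemA
variable {Q : Type*} [CommGroup Q] [Finite Q]

lemma lemA_core {k : ℕ} (hk : 2 ≤ k) (hexp : ∀ q : Q, q ^ k = 1) (A : Finset Q) :
    ∀ g ∈ closure (A : Set Q), ∃ w : List Q,
      isWord (A : Set Q) w ∧ w.prod = g ∧ k ^ w.length ≤ Nat.card (closure (A : Set Q)) ^ k := by
  classical
  induction A using Finset.induction_on with
  | empty =>
    intro g hg
    rw [Finset.coe_empty, Subgroup.closure_empty, Subgroup.mem_bot] at hg
    exact ⟨[], by simp [isWord], by simp [hg], by simp⟩
  | @insert a A ha ih =>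
    intro g hg
    have hins : ((insert a A : Finset Q) : Set Q) = insert a (A : Set Q) := Finset.coe_insert a A
    set S' : Subgroup Q := closure (A : Set Q) with hS'
    set S : Subgroup Q := closure ((insert a A : Finset Q) : Set Q) with hS
    have hSeq : S = zpowers a ⊔ S' := by
      rw [hS, hins, Set.insert_eq, Subgroup.closure_union, ← Subgroup.zpowers_eq_closure]
    have hS'S : S' ≤ S := by
      rw [hSeq]; exact le_sup_right
    have haS : a ∈ S := subset_closure (by rw [hins]; exact Set.mem_insert a _)
    -- relative order j
    have hTne : (1:Q) = 1 := rfl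
    set T : Set ℕ := {m | 0 < m ∧ a ^ m ∈ S'} with hT
    have hkT : k ∈ T := ⟨by omega, by rw [hexp a]; exact one_mem S'⟩
    set j : ℕ := sInf T with hj
    have hjT : j ∈ T := Nat.sInf_mem ⟨k, hkT⟩
    have hjpos : 0 < j := hjT.1
    have hajS' : a ^ j ∈ S' := hjT.2
    have hjk : j ≤ k := Nat.sInf_le hkT
    -- decompose g
    rw [hSeq, Subgroup.mem_sup] at hg
    obtain ⟨y, hy, z, hz, hyz⟩ := hg
    obtain ⟨e, rfl⟩ := Subgroup.mem_zpowers_iff.mp hy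
    set r : ℕ := (e % (j : ℤ)).toNat with hr
    have hjz : (0:ℤ) < (j:ℤ) := by exact_mod_cast hjpos
    have hrlt : r < j := by
      have := Int.emod_lt_of_pos e hjz
      have := Int.emod_nonneg e (by omega : (j:ℤ) ≠ 0)
      omega
    have he2 : e = (r:ℤ) + (j:ℤ) * (e / (j:ℤ)) := by
      have h := Int.mul_ediv_add_emod e (j:ℤ)
      rw [hr, Int.toNat_of_nonneg (Int.emod_nonneg e (by omega : (j:ℤ) ≠ 0))]
      linarith
    have hae : a ^ e = a ^ (r:ℤ) * (a ^ (j:ℤ)) ^ (e / (j:ℤ)) := by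
      nth_rewrite 1 [he2]
      rw [zpow_add, zpow_mul]
    have hzS' : (a ^ (j:ℤ)) ^ (e / (j:ℤ)) * z ∈ S' := by
      refine mul_mem (zpow_mem ?_ _) hz
      rw [zpow_natCast]; exact hajS'
    obtain ⟨w', hw', hwp', hwl'⟩ := ih _ hzS'
    refine ⟨List.replicate r a ++ w', ?_, ?_, ?_⟩
    · intro x hx
      rcases List.mem_append.mp hx with h | h
      · rw [List.eq_of_mem_replicate h, hins]
        exact Or.inl (Set.mem_insert a _)
      · rcases hw' x h with h' | h'
        · exact Or.inl (by rw [hins]; exact Set.mem_insert_of_mem _ h')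
        · exact Or.inr (by rw [hins]; exact Set.mem_insert_of_mem _ h')
    · rw [List.prod_append, List.prod_replicate, hwp', ← hyz, hae]
      simp [zpow_natCast, mul_assoc]
    · -- numeric
      have hcard : j * Nat.card S' ≤ Nat.card S := by
        have hinj : Function.Injective (fun p : Fin j × S' => (⟨a ^ (p.1 : ℕ) * (p.2 : Q),
            mul_mem (pow_mem haS _) (hS'S p.2.2)⟩ : S)) := by
          have key : ∀ (i1 i2 : Fin j) (s1 s2 : S'), i1 ≤ i2 →
              a ^ (i1:ℕ) * (s1:Q) = a ^ (i2:ℕ) * (s2:Q) → i1 = i2 ∧ s1 = s2 := by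
            intro i1 i2 s1 s2 hle heq
            have hd : a ^ ((i2:ℕ) - (i1:ℕ)) = (s1:Q) * (s2:Q)⁻¹ := by
              have h1 : a ^ (i2:ℕ) = a ^ (i1:ℕ) * a ^ ((i2:ℕ) - (i1:ℕ)) := by
                rw [← pow_add]; congr 1; omega
              rw [h1] at heq
              calc a ^ ((i2:ℕ) - (i1:ℕ))
                  = (a ^ (i1:ℕ))⁻¹ * (a ^ (i1:ℕ) * a ^ ((i2:ℕ) - (i1:ℕ)) * (s2:Q)) * (s2:Q)⁻¹ := by group
                _ = (a ^ (i1:ℕ))⁻¹ * (a ^ (i1:ℕ) * (s1:Q)) * (s2:Q)⁻¹ := by rw [heq]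
                _ = (s1:Q) * (s2:Q)⁻¹ := by group
            have hmem : a ^ ((i2:ℕ) - (i1:ℕ)) ∈ S' := by
              rw [hd]; exact mul_mem s1.2 (inv_mem s2.2)
            have heq0 : (i2:ℕ) - (i1:ℕ) = 0 := by
              by_contra h0
              have : j ≤ (i2:ℕ) - (i1:ℕ) := Nat.sInf_le ⟨by omega, hmem⟩
              have := i2.2
              omega
            have hii : i1 = i2 := by
              have := i1.2; have := i2.2
              apply Fin.ext; omega
            refine ⟨hii, ?_⟩
            subst hii
            have := mul_left_cancel heq
            exact Subtype.ext this
          rintro ⟨i1, s1⟩ ⟨i2, s2⟩ h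
          simp only [Subtype.mk.injEq] at h
          rcases le_total i1 i2 with hle | hle
          · obtain ⟨h1, h2⟩ := key i1 i2 s1 s2 hle h
            simp [h1, h2]
          · obtain ⟨h1, h2⟩ := key i2 i1 s2 s1 hle h.symm
            simp [h1, h2]
        have := Nat.card_le_card_of_injective _ hinj
        simpa [Nat.card_prod] using this
      have hkr : k ^ r ≤ j ^ k := by
        rcases Nat.lt_or_ge j 2 with h2 | h2
        · have hj1 : j = 1 := by omega
          have hr0 : r = 0 := by omega
          rw [hr0, hj1]
          simp
        · calc k ^ r ≤ k ^ (j - 1) := Nat.pow_le_pow_right (by omega) (by omega)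
            _ ≤ j ^ k := numkey h2 hjk
      calc k ^ (List.replicate r a ++ w').length = k ^ r * k ^ w'.length := by
            rw [List.length_append, List.length_replicate, pow_add]
        _ ≤ j ^ k * Nat.card S' ^ k := Nat.mul_le_mul hkr hwl'
        _ = (j * Nat.card S') ^ k := (mul_pow _ _ _).symm
        _ ≤ Nat.card S ^ k := Nat.pow_le_pow_left hcard k
      
lemma lemA {X : Set Q} (hX : closure X = ⊤) {n k : ℕ} (hk : 2 ≤ k)
    (hcard : Nat.card Q ≤ k ^ n) (hexp : ∀ q : Q, q ^ k = 1) (g : Q) :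
    sLen X g ≤ n * k := by
  classical
  have hXfin : X.Finite := Set.toFinite X
  set A : Finset Q := hXfin.toFinset with hA
  have hAX : (A : Set Q) = X := hXfin.coe_toFinset
  have hg : g ∈ closure (A : Set Q) := by rw [hAX, hX]; exact mem_top g
  obtain ⟨w, hw, hp, hl⟩ := lemA_core hk hexp A g hg
  have hlen : w.length ≤ n * k := by
    have h1 : k ^ w.length ≤ k ^ (n * k) := by
      calc k ^ w.length ≤ Nat.card (closure (A : Set Q)) ^ k := hl
        _ ≤ (k ^ n) ^ k := Nat.pow_le_pow_left (le_trans (Nat.card_le_card_of_injective _ Subtype.val_injective) hcard) k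
        _ = k ^ (n * k) := by rw [← pow_mul]
    exact (Nat.pow_le_pow_iff_right (by omega : 1 < k)).mp h1
  exact le_trans (sLen_le_of_word (by rw [← hAX] at *; exact hw) hp) hlen

end lemA

section lemB
variable {H : Type*} [Group H] [Finite H]

lemma lemB (X : Set H) (hX : closure X = ⊤) (N : Subgroup H) (d : ℕ)
    (hquot : ∀ g : H, ∃ w : List H, isWord X w ∧ w.length ≤ d ∧ w.prod⁻¹ * g ∈ N) :
    ∃ Y : Set ↥N, closure Y = ⊤ ∧
      ∀ g : H, sLen X g ≤ d + (2*d+1) * diamS ↥N Y := by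
  have hmemX : ∀ g : H, g ∈ closure X := fun g => by rw [hX]; exact mem_top g
  set Y : Set ↥N := {y | sLen X (y : H) ≤ 2*d+1} with hY
  set M : Subgroup H := (closure Y).map N.subtype with hM
  have hMN : M ≤ N := by
    rw [hM]
    rintro x ⟨y, _, rfl⟩
    exact y.2
  have hYM : ∀ (m : H) (hm : m ∈ N), sLen X m ≤ 2*d+1 → m ∈ M := by
    intro m hm hsl
    exact ⟨⟨m, hm⟩, subset_closure hsl, rfl⟩
  -- claim 1
  have claim1 : ∀ u : List H, isWord X u →
      ∃ v : List H, isWord X v ∧ v.length ≤ d ∧ v.prod⁻¹ * u.prod ∈ M := by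
    intro u
    induction u with
    | nil =>
      intro _
      obtain ⟨v, hv, hvl, hvm⟩ := hquot 1
      refine ⟨v, hv, hvl, ?_⟩
      simp only [List.prod_nil]
      refine hYM _ (by simpa using hvm) ?_
      rw [mul_one]
      calc sLen X v.prod⁻¹ ≤ sLen X v.prod := sLen_inv_le (hmemX _)
        _ ≤ v.length := sLen_le_of_word hv rfl
        _ ≤ 2*d+1 := by omega
    | cons x u' ih =>
      intro hu
      have hu' : isWord X u' := fun y hy => hu y (List.mem_cons_of_mem x hy)
      obtain ⟨v', hv', hvl', hm'⟩ := ih hu'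
      obtain ⟨v, hv, hvl, hy0⟩ := hquot (x * v'.prod)
      set y0 : H := v.prod⁻¹ * (x * v'.prod) with hy0def
      have hy0M : y0 ∈ M := by
        refine hYM _ hy0 ?_
        have h1 : sLen X v.prod⁻¹ ≤ d :=
          le_trans (sLen_inv_le (hmemX _)) (le_trans (sLen_le_of_word hv rfl) hvl)
        have h2 : sLen X x ≤ 1 := by
          refine sLen_le_of_word (w := [x]) ?_ (by simp)
          intro z hz
          rw [show z = x by simpa using hz]
          exact hu x List.mem_cons_self
        have h3 : sLen X v'.prod ≤ d := le_trans (sLen_le_of_word hv' rfl) hvl'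
        calc sLen X y0 ≤ sLen X (v.prod⁻¹ * x) + sLen X v'.prod := by
              rw [hy0def, ← mul_assoc]
              exact sLen_mul_le (hmemX _) (hmemX _)
          _ ≤ sLen X v.prod⁻¹ + sLen X x + sLen X v'.prod :=
              Nat.add_le_add_right (sLen_mul_le (hmemX _) (hmemX _)) _
          _ ≤ 2*d+1 := by omega
      refine ⟨v, hv, hvl, ?_⟩
      have : v.prod⁻¹ * (x :: u').prod = y0 * (v'.prod⁻¹ * u'.prod) := by
        rw [List.prod_cons, hy0def]
        group
      rw [this]
      exact mul_mem hy0M hm'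
  -- claim 2 : Y generates N
  have claim2 : closure Y = (⊤ : Subgroup ↥N) := by
    rw [eq_top_iff]
    intro ν _
    obtain ⟨u, hu, hup⟩ := exists_word_of_mem_closure (hmemX (ν : H))
    obtain ⟨v, hv, hvl, hm⟩ := claim1 u hu
    rw [hup] at hm
    have hvN : v.prod ∈ N := by
      have h1 : v.prod = (ν : H) * (v.prod⁻¹ * (ν : H))⁻¹ := by group
      rw [h1]
      exact mul_mem ν.2 (inv_mem (hMN hm))
    obtain ⟨m', hm', hm'eq⟩ := hm
    have hp : (⟨v.prod, hvN⟩ : ↥N) ∈ closure Y := by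
      apply Subgroup.subset_closure
      show sLen X v.prod ≤ 2*d+1
      exact le_trans (sLen_le_of_word hv rfl) (by omega)
    have hfin : ν = (⟨v.prod, hvN⟩ : ↥N) * m' := by
      apply Subtype.ext
      have hc : (((⟨v.prod, hvN⟩ : ↥N) * m' : ↥N) : H) = v.prod * (N.subtype m') := rfl
      rw [hc, hm'eq]
      group
    rw [hfin]
    exact mul_mem hp hm'
  -- word-length bound for elements of N
  have hNword : ∀ L : List ↥N, isWord Y L → sLen X ((L.prod : ↥N) : H) ≤ (2*d+1) * L.length := by
    intro L
    induction L with
    | nil => intro _; simpa using Nat.le_of_eq (sLen_one (X := X))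
    | cons y L' ih =>
      intro hL
      have hL' : isWord Y L' := fun z hz => hL z (List.mem_cons_of_mem y hz)
      have hy : sLen X ((y : ↥N) : H) ≤ 2*d+1 := by
        rcases hL y List.mem_cons_self with h | h
        · exact h
        · have h1 : sLen X (((y⁻¹ : ↥N) : H)) ≤ 2*d+1 := h
          calc sLen X ((y : ↥N) : H) = sLen X ((((y⁻¹ : ↥N) : H))⁻¹) := by
                congr 1; push_cast; group
            _ ≤ sLen X (((y⁻¹ : ↥N) : H)) := sLen_inv_le (hmemX _)
            _ ≤ 2*d+1 := h1
      calc sLen X (((y :: L').prod : ↥N) : H) = sLen X ((y : H) * ((L'.prod : ↥N) : H)) := by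
            rw [List.prod_cons]; push_cast; rfl
        _ ≤ sLen X (y : H) + sLen X ((L'.prod : ↥N) : H) := sLen_mul_le (hmemX _) (hmemX _)
        _ ≤ (2*d+1) + (2*d+1) * L'.length := Nat.add_le_add hy (ih hL')
        _ = (2*d+1) * (y :: L').length := by rw [List.length_cons]; ring
  refine ⟨Y, claim2, fun g => ?_⟩
  obtain ⟨v, hv, hvl, hm⟩ := hquot g
  set ν : ↥N := ⟨v.prod⁻¹ * g, hm⟩ with hν
  have hνY : sLen Y ν ≤ diamS ↥N Y := sLen_le_diamS
  obtain ⟨L, hL, hLp, hLl⟩ := exists_word_sLen (X := Y) (by rw [claim2]; exact mem_top ν)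
  have h1 : sLen X ((ν : ↥N) : H) ≤ (2*d+1) * diamS ↥N Y := by
    calc sLen X ((ν : ↥N) : H) = sLen X ((L.prod : ↥N) : H) := by rw [hLp]
      _ ≤ (2*d+1) * L.length := hNword L hL
      _ ≤ (2*d+1) * diamS ↥N Y := Nat.mul_le_mul_left _ (hLl ▸ hνY)
  have hg : g = v.prod * ((ν : ↥N) : H) := by rw [hν]; group
  calc sLen X g ≤ sLen X v.prod + sLen X ((ν : ↥N) : H) := by
        rw [hg]; exact sLen_mul_le (hmemX _) (hmemX _)
    _ ≤ d + (2*d+1) * diamS ↥N Y :=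
        Nat.add_le_add (le_trans (sLen_le_of_word hv rfl) hvl) h1

end lemB

section lemC

universe u

lemma lemC (l : ℕ) : ∀ (H : Type u) [Group H] [Finite H] (X : Set H),
    closure X = ⊤ → ∀ (N : ℕ → Subgroup H) (k : ℕ → ℕ) (n : ℕ),
    N 0 = ⊤ → N l = ⊥ →
    (∀ i, i + 1 ≤ l → N (i+1) ≤ N i) →
    (∀ i, (N i).Normal) →
    (∀ i, i < l → ⁅N i, N i⁆ ≤ N (i+1)) →
    (∀ i, i < l → ∀ g ∈ N i, g ^ (k i) ∈ N (i+1)) →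
    (∀ i, i < l → 2 ≤ k i) →
    (∀ i, i < l → Nat.card (N i) ≤ k i ^ n * Nat.card (N (i+1))) →
    2 * diamS H X + 1 ≤ ∏ i ∈ Finset.range l, (2 * n * k i + 1) := by
  induction l with
  | zero =>
    intro H _ _ X hX N k n hN0 hNl _ _ _ _ _ _
    have htriv : ∀ g : H, g = 1 := by
      intro g
      have : g ∈ N 0 := hN0 ▸ mem_top g
      rw [hNl] at this
      exact this
    have : diamS H X = 0 := Nat.le_zero.mp (diamS_le (fun g => by rw [htriv g, sLen_one]))
    simp [this]
  | succ l ih =>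
    intro H _ _ X hX N k n hN0 hNl hdesc hnorm hcommH hexpH hkH hcardH
    have hmemX : ∀ g : H, g ∈ closure X := fun g => by rw [hX]; exact mem_top g
    haveI hN1 : (N 1).Normal := hnorm 1
    have hcomm1 : commutator H ≤ N 1 := by
      have := hcommH 0 (by omega)
      rw [hN0] at this
      rw [commutator_def]
      exact this
    letI : CommGroup (H ⧸ N 1) :=
      { (inferInstance : Group (H ⧸ N 1)) with
        mul_comm := by
          intro a b
          induction a using QuotientGroup.induction_on with | _ a =>
          induction b using QuotientGroup.induction_on with | _ b =>
          show ((a : H ⧸ N 1) * b) = (b : H ⧸ N 1) * a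
          rw [← QuotientGroup.mk_mul, ← QuotientGroup.mk_mul, QuotientGroup.eq]
          have hc : (a*b)⁻¹ * (b*a) = ⁅b⁻¹, a⁻¹⁆ := by
            rw [commutatorElement_def]; group
          rw [hc]
          exact hcomm1 (Subgroup.commutator_mem_commutator (mem_top _) (mem_top _)) }
    set φ : H →* H ⧸ N 1 := QuotientGroup.mk' (N 1) with hφ
    set XQ : Set (H ⧸ N 1) := φ '' X with hXQ
    have hXQtop : closure XQ = ⊤ := by
      rw [hXQ, ← MonoidHom.map_closure, hX, Subgroup.map_top_of_surjective _ (QuotientGroup.mk'_surjective (N 1))]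
    have hcardN1pos : 0 < Nat.card (N 1) := Nat.card_pos
    have hcardQ : Nat.card (H ⧸ N 1) ≤ k 0 ^ n := by
      have h1 : Nat.card H = Nat.card (H ⧸ N 1) * Nat.card (N 1) :=
        Subgroup.card_eq_card_quotient_mul_card_subgroup (N 1)
      have h2 : Nat.card (N 0) ≤ k 0 ^ n * Nat.card (N 1) := hcardH 0 (by omega)
      rw [hN0, Subgroup.card_top] at h2
      rw [h1] at h2
      exact Nat.le_of_mul_le_mul_right h2 hcardN1pos
    have hexpQ : ∀ q : H ⧸ N 1, q ^ (k 0) = 1 := by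
      intro q
      induction q using QuotientGroup.induction_on with | _ g =>
      have : g ^ (k 0) ∈ N 1 := hexpH 0 (by omega) g (hN0 ▸ mem_top g)
      rw [← QuotientGroup.mk_pow, QuotientGroup.eq_one_iff]
      exact this
    have hk0 : 2 ≤ k 0 := hkH 0 (by omega)
    have hQ : ∀ q : H ⧸ N 1, sLen XQ q ≤ n * k 0 := lemA hXQtop hk0 hcardQ hexpQ
    -- lift words
    have hlift : ∀ W : List (H ⧸ N 1), isWord XQ W →
        ∃ w : List H, isWord X w ∧ w.length = W.length ∧ φ w.prod = W.prod := by
      intro W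
      induction W with
      | nil => exact fun _ => ⟨[], by simp [isWord], by simp, by simp⟩
      | cons q W' ihW =>
        intro hW
        obtain ⟨w', hw', hwl', hwp'⟩ := ihW (fun z hz => hW z (List.mem_cons_of_mem q hz))
        rcases hW q List.mem_cons_self with h | h
        · obtain ⟨x, hxX, hφx⟩ := h
          exact ⟨x :: w', by
            intro z hz
            rcases List.mem_cons.mp hz with rfl | hz'
            · exact Or.inl hxX
            · exact hw' z hz', by simp [hwl'], by
            rw [List.prod_cons, List.prod_cons, map_mul, hφx, hwp']⟩
        · obtain ⟨x, hxX, hφx⟩ := h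
          refine ⟨x⁻¹ :: w', ?_, by simp [hwl'], ?_⟩
          · intro z hz
            rcases List.mem_cons.mp hz with rfl | hz'
            · exact Or.inr (by rw [inv_inv]; exact hxX)
            · exact hw' z hz'
          · rw [List.prod_cons, List.prod_cons, map_mul, map_inv, hφx, inv_inv, hwp']
    have hquot : ∀ g : H, ∃ w : List H, isWord X w ∧ w.length ≤ n * k 0 ∧ w.prod⁻¹ * g ∈ N 1 := by
      intro g
      obtain ⟨W, hW, hWp, hWl⟩ := exists_word_sLen (X := XQ) (g := φ g)
        (by rw [hXQtop]; exact mem_top _)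
      obtain ⟨w, hw, hwl, hwp⟩ := hlift W hW
      refine ⟨w, hw, ?_, ?_⟩
      · rw [hwl, hWl]; exact hQ (φ g)
      · rw [← QuotientGroup.ker_mk' (N 1), MonoidHom.mem_ker]
        rw [map_mul, map_inv, hwp, hWp]
        rw [hφ]
        group
    obtain ⟨Y, hYtop, hbound⟩ := lemB X hX (N 1) (n * k 0) hquot
    -- apply IH to ↥(N 1)
    have hmono1 : ∀ i, i + 1 ≤ l + 1 → N (i+1) ≤ N 1 := by
      intro i
      induction i with
      | zero => exact fun _ => le_refl _
      | succ m ihm => exact fun h => le_trans (hdesc (m+1) h) (ihm (by omega))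
    have ihres := ih ↥(N 1) Y hYtop
      (fun i => (N (i+1)).subgroupOf (N 1)) (fun i => k (i+1)) n
      (Subgroup.subgroupOf_self (N 1))
      (by show (N (l+1)).subgroupOf (N 1) = ⊥
          rw [hNl]; exact Subgroup.bot_subgroupOf _)
      (fun i hi => Subgroup.comap_mono (hdesc (i+1) (by omega)))
      (fun i => @Subgroup.normal_subgroupOf _ _ _ _ (hnorm (i+1)))
      (fun i hi => by
        show ⁅(N (i+1)).subgroupOf (N 1), (N (i+1)).subgroupOf (N 1)⁆ ≤
          Subgroup.comap (N 1).subtype (N (i+2))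
        rw [← Subgroup.map_le_iff_le_comap]
        calc Subgroup.map (N 1).subtype ⁅(N (i+1)).subgroupOf (N 1), (N (i+1)).subgroupOf (N 1)⁆
            = ⁅(N (i+1)) ⊓ (N 1), (N (i+1)) ⊓ (N 1)⁆ := by
              rw [Subgroup.map_commutator, Subgroup.subgroupOf_map_subtype]
          _ ≤ ⁅N (i+1), N (i+1)⁆ := Subgroup.commutator_mono inf_le_left inf_le_left
          _ ≤ N (i+2) := hcommH (i+1) (by omega))
      (fun i hi g hg => by
        rw [Subgroup.mem_subgroupOf] at hg ⊢
        rw [SubgroupClass.coe_pow]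
        exact hexpH (i+1) (by omega) _ hg)
      (fun i hi => hkH (i+1) (by omega))
      (fun i hi => by
        have e1 : Nat.card ((N (i+1)).subgroupOf (N 1)) = Nat.card (N (i+1)) :=
          Nat.card_congr (Subgroup.subgroupOfEquivOfLe (hmono1 i (by omega))).toEquiv
        have e2 : Nat.card ((N (i+2)).subgroupOf (N 1)) = Nat.card (N (i+2)) :=
          Nat.card_congr (Subgroup.subgroupOfEquivOfLe (hmono1 (i+1) (by omega))).toEquiv
        rw [e1, e2]
        exact hcardH (i+1) (by omega))
    -- combine
    set D' := diamS ↥(N 1) Y with hD'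
    have h1 : diamS H X ≤ n * k 0 + (2*(n * k 0)+1) * D' := diamS_le hbound
    calc 2 * diamS H X + 1 ≤ (2*(n*k 0)+1) * (2*D'+1) := by nlinarith
      _ ≤ (2*(n*k 0)+1) * ∏ i ∈ Finset.range l, (2 * n * k (i+1) + 1) :=
          Nat.mul_le_mul_left _ ihres
      _ = ∏ i ∈ Finset.range (l+1), (2 * n * k i + 1) := by
          rw [Finset.prod_range_succ']
          ring
end lemC

section final

lemma derivedSeries_succ_le {G : Type*} [Group G] (i : ℕ) :
    derivedSeries G (i+1) ≤ derivedSeries G i := by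
  rw [derivedSeries_succ, Subgroup.commutator_le]
  intro g hg h hh
  rw [commutatorElement_def]
  exact mul_mem (mul_mem (mul_mem hg hh) (inv_mem hg)) (inv_mem hh)

lemma derived_stab {G : Type*} [Group G] (i : ℕ)
    (h : derivedSeries G (i+1) = derivedSeries G i) :
    ∀ j, i ≤ j → derivedSeries G j = derivedSeries G i := by
  intro j hj
  induction j with
  | zero => rw [Nat.le_zero.mp hj]
  | succ m ihm =>
    rcases Nat.lt_or_ge i (m+1) with h1 | h1
    · have hm := ihm (by omega)
      rw [derivedSeries_succ, hm, ← derivedSeries_succ, h]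
    · rw [Nat.le_antisymm hj h1]

lemma pow_mem_of_card {G : Type*} [Group G] [Finite G] {A B : Subgroup G} [hBn : B.Normal]
    (hBA : B ≤ A) {x : G} (hx : x ∈ A) : x ^ (Nat.card A / Nat.card B) ∈ B := by
  haveI : (B.subgroupOf A).Normal := Subgroup.normal_subgroupOf
  have hcardB : Nat.card (B.subgroupOf A) = Nat.card B :=
    Nat.card_congr (Subgroup.subgroupOfEquivOfLe hBA).toEquiv
  have hL : Nat.card A = Nat.card (↥A ⧸ B.subgroupOf A) * Nat.card B := by
    rw [← hcardB]
    exact Subgroup.card_eq_card_quotient_mul_card_subgroup _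
  have hk : Nat.card A / Nat.card B = Nat.card (↥A ⧸ B.subgroupOf A) := by
    rw [hL, Nat.mul_div_cancel _ Nat.card_pos]
  have h1 : (QuotientGroup.mk (⟨x, hx⟩ : ↥A) : ↥A ⧸ B.subgroupOf A) ^ Nat.card (↥A ⧸ B.subgroupOf A) = 1 :=
    pow_card_eq_one'
  rw [← QuotientGroup.mk_pow, QuotientGroup.eq_one_iff] at h1
  rw [Subgroup.mem_subgroupOf] at h1
  rw [hk]
  simpa using h1

lemma card_pi_subgroup {n : ℕ} {G : Type*} [Group G] [Finite G] (K : Subgroup G) :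
    Nat.card (Subgroup.pi Set.univ (fun _ : Fin n => K)) = Nat.card K ^ n := by
  have e : ↥(Subgroup.pi Set.univ (fun _ : Fin n => K)) ≃ (Fin n → ↥K) :=
    { toFun := fun x i => ⟨x.1 i, x.2 i (Set.mem_univ i)⟩
      invFun := fun x => ⟨fun i => x i, fun i _ => (x i).2⟩
      left_inv := fun x => rfl
      right_inv := fun x => rfl }
  rw [Nat.card_congr e, Nat.card_pi]
  simp [Finset.prod_const]

lemma numfinal (m : ℕ) (n : ℕ) (hn : 1 ≤ n) (k : ℕ → ℕ) (hk : ∀ i, i < m+1 → 2 ≤ k i) :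
    ∏ i ∈ Finset.range (m+1), (2*n*(k i) + 1) ≤
      2 * (4^m * n^(m+1) * ∏ i ∈ Finset.range (m+1), k i) + 1 := by
  induction m with
  | zero => simp [Finset.prod_range_one]; ring_nf; omega
  | succ m ihm =>
    have hk' : ∀ i, i < m+1 → 2 ≤ k i := fun i hi => hk i (by omega)
    have ih := ihm hk'
    set P := ∏ i ∈ Finset.range (m+1), (2*n*(k i) + 1) with hP
    set K := ∏ i ∈ Finset.range (m+1), k i with hK
    set B := 4^m * n^(m+1) * K with hB
    have hKpos : 1 ≤ K := by
      rw [hK]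
      refine Nat.one_le_iff_ne_zero.mpr (Nat.pos_iff_ne_zero.mp (Finset.prod_pos ?_))
      intro i hi
      have := hk' i (Finset.mem_range.mp hi)
      omega
    have hBpos : 1 ≤ B := by
      have h4 : 1 ≤ 4^m := Nat.one_le_pow _ _ (by omega)
      have hnp : 1 ≤ n^(m+1) := Nat.one_le_pow _ _ (by omega)
      calc 1 = 1 * 1 * 1 := by ring
        _ ≤ 4^m * n^(m+1) * K := by
            exact Nat.mul_le_mul (Nat.mul_le_mul h4 hnp) hKpos
    have hnk : 2 ≤ n * k (m+1) := by
      have := hk (m+1) (by omega)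
      nlinarith
    rw [Finset.prod_range_succ, Finset.prod_range_succ (f := k)]
    have goalrw : 4^(m+1) * n^(m+2) * (K * k (m+1)) = 4 * (n * k (m+1)) * B := by
      rw [hB]; ring
    rw [goalrw]
    have hPB : P ≤ 2 * B + 1 := ih
    have ht1 : 1 ≤ n * k (m+1) := by omega
    have h3 : 2*B ≤ 2*B*(n*k (m+1)) := by nlinarith
    have h4 : 2*(n*k (m+1)) ≤ 2*B*(n*k (m+1)) := by nlinarith
    calc P * (2*n*(k (m+1)) + 1)
        ≤ (2*B+1) * (2*n*(k (m+1))+1) := Nat.mul_le_mul_right _ hPB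
      _ = 4*B*(n*(k (m+1))) + 2*B + (2*(n*(k (m+1))) + 1) := by ring
      _ ≤ 4*B*(n*(k (m+1))) + 2*B*(n*(k (m+1))) + (2*B*(n*(k (m+1))) + 1) := by
          have := h3; have := h4; omega
      _ = 8*B*(n*(k (m+1))) + 1 := by ring
      _ = 2 * (4 * (n * k (m+1)) * B) + 1 := by ring

end final


theorem stmt17 {G : Type*} [Group G] [Finite G] [Group.IsSolvable G] (l : ℕ)
    (hl : derivedSeries G l = ⊥) (hmin : ∀ m < l, derivedSeries G m ≠ ⊥) :
    ∀ n : ℕ, 1 ≤ n → DS (Fin n → G) ≤ 4 ^ (l - 1) * n ^ l * Nat.card G := by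
  intro n hn
  rcases Nat.eq_zero_or_pos l with rfl | hl0
  · rw [derivedSeries_zero] at hl
    have htriv : ∀ g : Fin n → G, g = 1 := by
      intro g; funext i
      have : g i ∈ (⊤ : Subgroup G) := mem_top _
      rw [hl] at this
      exact this
    apply DS_le
    intro X hX
    exact le_trans (diamS_le fun g => by rw [htriv g, sLen_one]) (Nat.zero_le _)
  · obtain ⟨m, rfl⟩ : ∃ m, l = m + 1 := ⟨l - 1, by omega⟩
    apply DS_le
    intro X hX
    set k : ℕ → ℕ := fun i => Nat.card (derivedSeries G i) / Nat.card (derivedSeries G (i+1)) with hkdef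
    have hdvd : ∀ i, Nat.card (derivedSeries G (i+1)) ∣ Nat.card (derivedSeries G i) :=
      fun i => Subgroup.card_dvd_of_le (derivedSeries_succ_le i)
    have hkmul : ∀ i, k i * Nat.card (derivedSeries G (i+1)) = Nat.card (derivedSeries G i) :=
      fun i => Nat.div_mul_cancel (hdvd i)
    have hcpos : ∀ i, 0 < Nat.card (derivedSeries G i) := fun i => Nat.card_pos
    have hkge2 : ∀ i, i < m + 1 → 2 ≤ k i := by
      intro i hi
      by_contra hcon
      have hk1 : k i ≤ 1 := by omega
      have : Nat.card (derivedSeries G i) ≤ Nat.card (derivedSeries G (i+1)) := by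
        have := hkmul i
        nlinarith [hcpos i, hcpos (i+1)]
      have heq : derivedSeries G (i+1) = derivedSeries G i :=
        Subgroup.eq_of_le_of_card_ge (derivedSeries_succ_le i) this
      have hstab := derived_stab i heq (m+1) (by omega)
      rw [hl] at hstab
      exact hmin i (by omega) hstab.symm
    set N : ℕ → Subgroup (Fin n → G) :=
      fun i => Subgroup.pi Set.univ (fun _ => derivedSeries G i) with hNdef
    have key := lemC (m+1) (Fin n → G) X hX N k n
      (by show Subgroup.pi Set.univ (fun _ => derivedSeries G 0) = ⊤
          simp [derivedSeries_zero, Subgroup.pi_top])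
      (by show Subgroup.pi Set.univ (fun _ => derivedSeries G (m+1)) = ⊥
          rw [hl]
          ext f
          simp [Subgroup.mem_pi, funext_iff])
      (fun i _ => by
        intro f hf j hj
        exact derivedSeries_succ_le i (hf j hj))
      (fun i => by
        constructor
        intro f hf c
        intro j hj
        show c j * f j * (c j)⁻¹ ∈ derivedSeries G i
        exact (derivedSeries_normal G i).conj_mem _ (hf j (Set.mem_univ j)) (c j))
      (fun i _ => by
        rw [Subgroup.commutator_le]
        intro f hf g hg
        intro j hj
        show ⁅f j, g j⁆ ∈ derivedSeries G (i+1)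
        rw [derivedSeries_succ]
        exact Subgroup.commutator_mem_commutator (hf j (Set.mem_univ j)) (hg j (Set.mem_univ j)))
      (fun i _ g hg => by
        intro j hj
        show (g j) ^ (k i) ∈ derivedSeries G (i+1)
        haveI : (derivedSeries G (i+1)).Normal := derivedSeries_normal G (i+1)
        exact pow_mem_of_card (derivedSeries_succ_le i) (hg j (Set.mem_univ j)))
      hkge2
      (fun i _ => by
        show Nat.card (Subgroup.pi Set.univ (fun _ : Fin n => derivedSeries G i)) ≤ _
        rw [card_pi_subgroup, card_pi_subgroup, ← hkmul i, mul_pow])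
    -- product of k's equals card G
    have hprod : ∀ j : ℕ, (∏ i ∈ Finset.range j, k i) * Nat.card (derivedSeries G j) = Nat.card G := by
      intro j
      induction j with
      | zero =>
        rw [Finset.prod_range_zero, one_mul, derivedSeries_zero, Subgroup.card_top]
      | succ j ihj =>
        rw [Finset.prod_range_succ, mul_assoc, hkmul j, ihj]
    have hKG : ∏ i ∈ Finset.range (m+1), k i = Nat.card G := by
      have := hprod (m+1)
      rw [hl, Subgroup.card_bot, mul_one] at this
      exact this
    have hnum := numfinal m n hn k hkge2
    rw [hKG] at hnum
    have hfin : 2 * diamS (Fin n → G) X + 1 ≤ 2 * (4^m * n^(m+1) * Nat.card G) + 1 :=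
      le_trans key hnum
    have : diamS (Fin n → G) X ≤ 4^m * n^(m+1) * Nat.card G := by omega
    simpa using this
end

section
/- For every n ≥ 1, the maximum diameter of (Q₈)^n over all generating sets satisfies D(Q₈^n) ≤ 8n² + 3n, where Q₈ is the quaternion group of order 8. -/
open Subgroup

namespace Stmt19Aux

/-- Coordinate map `Q₈ → F₂ × F₂` with kernel `{±1}`. -/
def f0 : QuaternionGroup 2 → ZMod 2 × ZMod 2
  | .a i => ((i.val : ZMod 2), 0)
  | .xa i => ((i.val : ZMod 2), 1)

lemma f0_mul : ∀ q r : QuaternionGroup 2, f0 (q * r) = f0 q + f0 r := by decide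

lemma f0_one : f0 1 = 0 := by decide

lemma f0_central : ∀ q r : QuaternionGroup 2, f0 q = 0 → q * r = r * q := by decide

lemma f0_sq : ∀ q : QuaternionGroup 2, f0 q = 0 → q * q = 1 := by decide

lemma f0_sqrt : ∀ q : QuaternionGroup 2, f0 q = 0 → ∃ s, s * s = q := by decide

variable {n : ℕ}

/-- The coordinatewise abelianization map. -/
def F (g : Fin n → QuaternionGroup 2) : Fin n → ZMod 2 × ZMod 2 := fun j => f0 (g j)

lemma F_mul (g h : Fin n → QuaternionGroup 2) : F (g * h) = F g + F h :=
  funext fun j => f0_mul (g j) (h j)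

lemma F_one : F (1 : Fin n → QuaternionGroup 2) = 0 :=
  funext fun _ => f0_one

lemma F_inv (g : Fin n → QuaternionGroup 2) : F g⁻¹ = -F g := by
  have h : F g⁻¹ + F g = 0 := by
    rw [← F_mul, inv_mul_cancel, F_one]
  exact eq_neg_of_add_eq_zero_left h

lemma F_prod (l : List (Fin n → QuaternionGroup 2)) : F l.prod = (l.map F).sum := by
  induction l with
  | nil => simpa using F_one
  | cons a t ih => rw [List.prod_cons, F_mul, List.map_cons, List.sum_cons, ih]

lemma F_mem_span {X : Set (Fin n → QuaternionGroup 2)} (hX : Subgroup.closure X = ⊤)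
    (g : Fin n → QuaternionGroup 2) :
    F g ∈ Submodule.span (ZMod 2) (F '' X) := by
  let S : Subgroup (Fin n → QuaternionGroup 2) :=
  { carrier := {g | F g ∈ Submodule.span (ZMod 2) (F '' X)}
    one_mem' := by
      have h1 : F (1 : Fin n → QuaternionGroup 2) ∈ Submodule.span (ZMod 2) (F '' X) := by
        rw [F_one]; exact zero_mem _
      exact h1
    mul_mem' := by
      intro a b ha hb
      simp only [Set.mem_setOf_eq] at ha hb ⊢
      rw [F_mul]; exact add_mem ha hb
    inv_mem' := by
      intro a ha
      simp only [Set.mem_setOf_eq] at ha ⊢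
      rw [F_inv]; exact neg_mem ha }
  have hXS : X ⊆ ↑S := fun x hx => Submodule.subset_span ⟨x, hx, rfl⟩
  have h2 : Subgroup.closure X ≤ S := (Subgroup.closure_le S).2 hXS
  have hg : g ∈ Subgroup.closure X := by rw [hX]; trivial
  exact h2 hg

lemma zmod2_ne_zero : ∀ a : ZMod 2, a ≠ 0 → a = 1 := by decide

lemma finrank_V : Module.finrank (ZMod 2) (Fin n → ZMod 2 × ZMod 2) = 2 * n := by
  haveI : Fact (Nat.Prime 2) := ⟨Nat.prime_two⟩
  rw [Module.finrank_pi_fintype]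
  have h1 : Module.finrank (ZMod 2) (ZMod 2 × ZMod 2) = 2 := by
    rw [Module.finrank_prod, Module.finrank_self]
  simp [h1, Finset.sum_const, mul_comm]

/-- Every coset of the kernel of `F` contains a positive word of length at most `2n`. -/
lemma exists_word {X : Set (Fin n → QuaternionGroup 2)} (hX : Subgroup.closure X = ⊤)
    (t : Fin n → QuaternionGroup 2) :
    ∃ l : List (Fin n → QuaternionGroup 2),
      (∀ x ∈ l, x ∈ X) ∧ l.length ≤ 2 * n ∧ F l.prod = F t := by
  haveI : Fact (Nat.Prime 2) := ⟨Nat.prime_two⟩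
  obtain ⟨b, hbsub, hbspan, hbind⟩ := exists_linearIndependent (ZMod 2) (F '' X)
  have hv : F t ∈ Submodule.span (ZMod 2) b := by
    rw [hbspan]; exact F_mem_span hX t
  obtain ⟨c, hcsupp, hcsum⟩ := Submodule.mem_span_set.1 hv
  have hsum : ∑ i ∈ c.support, i = F t := by
    rw [← hcsum, Finsupp.sum]
    refine Finset.sum_congr rfl fun i hi => ?_
    rw [zmod2_ne_zero (c i) (Finsupp.mem_support_iff.1 hi), one_smul]
  have hcard : c.support.card ≤ 2 * n := by
    have hind : LinearIndepOn (ZMod 2) id (c.support : Set (Fin n → ZMod 2 × ZMod 2)) :=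
      LinearIndepOn.mono (R := ZMod 2) (v := id) hbind hcsupp
    have := LinearIndependent.finset_card_le_finrank (b := c.support) hind.linearIndependent
    rwa [finrank_V] at this
  have hchoice : ∀ v ∈ c.support, ∃ x, x ∈ X ∧ F x = v := by
    intro v hv'
    obtain ⟨x, hx, hfx⟩ := hbsub (hcsupp hv')
    exact ⟨x, hx, hfx⟩
  classical
  let pick : {v // v ∈ c.support.toList} → (Fin n → QuaternionGroup 2) :=
    fun p => (hchoice p.1 (Finset.mem_toList.1 p.2)).choose
  refine ⟨c.support.toList.attach.map pick, ?_, ?_, ?_⟩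
  · intro x hx
    obtain ⟨p, _, rfl⟩ := List.mem_map.1 hx
    exact (hchoice p.1 (Finset.mem_toList.1 p.2)).choose_spec.1
  · rw [List.length_map, List.length_attach, Finset.length_toList]
    exact hcard
  · have hmapF : ((c.support.toList.attach.map pick).map F) = c.support.toList := by
      rw [List.map_map]
      have h1 : c.support.toList.attach.map (F ∘ pick)
          = c.support.toList.attach.map Subtype.val :=
        List.map_congr_left fun p _ =>
          (hchoice p.1 (Finset.mem_toList.1 p.2)).choose_spec.2
      rw [h1, List.attach_map_subtype_val]
    have h2 : c.support.toList.sum = ∑ i ∈ c.support, i := by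
      have h3 := Finset.sum_map_toList c.support (id : (Fin n → ZMod 2 × ZMod 2) → _)
      simpa using h3
    rw [F_prod, hmapF, h2, hsum]

lemma wLen_le {X : Set (Fin n → QuaternionGroup 2)} (hX : Subgroup.closure X = ⊤)
    (g : Fin n → QuaternionGroup 2) : wLen X g ≤ 6 * n := by
  obtain ⟨w₁, hw₁X, hw₁len, hw₁⟩ := exists_word hX g
  set h : Fin n → QuaternionGroup 2 := (w₁.prod)⁻¹ * g with hh
  have hFh : F h = 0 := by
    rw [hh, F_mul, F_inv, hw₁, neg_add_cancel]
  have hsqrt : ∀ j, ∃ s, s * s = h j := fun j => f0_sqrt (h j) (congrFun hFh j)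
  choose s hs using hsqrt
  obtain ⟨w₂, hw₂X, hw₂len, hw₂⟩ := exists_word hX s
  set h' : Fin n → QuaternionGroup 2 := (w₂.prod)⁻¹ * s with hh'
  have hFh' : F h' = 0 := by
    rw [hh', F_mul, F_inv, hw₂, neg_add_cancel]
  have hcent : ∀ r : Fin n → QuaternionGroup 2, h' * r = r * h' := fun r =>
    funext fun j => f0_central (h' j) (r j) (congrFun hFh' j)
  have hsq : h' * h' = 1 := funext fun j => f0_sq (h' j) (congrFun hFh' j)
  have hs' : s = w₂.prod * h' := by rw [hh', mul_inv_cancel_left]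
  have hss : s * s = w₂.prod * w₂.prod := by
    calc s * s = w₂.prod * h' * (w₂.prod * h') := by rw [← hs']
    _ = w₂.prod * (h' * w₂.prod) * h' := by group
    _ = w₂.prod * (w₂.prod * h') * h' := by rw [hcent]
    _ = w₂.prod * w₂.prod * (h' * h') := by group
    _ = w₂.prod * w₂.prod := by rw [hsq, mul_one]
  have hssh : s * s = h := funext fun j => hs j
  have hgeq : (w₁ ++ (w₂ ++ w₂)).prod = g := by
    rw [List.prod_append, List.prod_append, ← hss, hssh, hh, mul_inv_cancel_left]
  have hmem : (w₁ ++ (w₂ ++ w₂)).length ∈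
      {m | ∃ l : List (Fin n → QuaternionGroup 2),
        (∀ x ∈ l, x ∈ X) ∧ l.length = m ∧ l.prod = g} := by
    refine ⟨w₁ ++ (w₂ ++ w₂), ?_, rfl, hgeq⟩
    intro x hx
    rcases List.mem_append.1 hx with hx | hx
    · exact hw₁X x hx
    · rcases List.mem_append.1 hx with hx | hx
      · exact hw₂X x hx
      · exact hw₂X x hx
  calc wLen X g ≤ (w₁ ++ (w₂ ++ w₂)).length := Nat.sInf_le hmem
  _ ≤ 6 * n := by
      simp only [List.length_append]
      omega

end Stmt19Aux

theorem stmt19 : ∀ n : ℕ, 1 ≤ n →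
    DW (Fin n → QuaternionGroup 2) ≤ 8 * n ^ 2 + 3 * n := by
  intro n hn
  have hne : {d | ∃ X : Set (Fin n → QuaternionGroup 2),
      Subgroup.closure X = ⊤ ∧ d = diamW (Fin n → QuaternionGroup 2) X}.Nonempty :=
    ⟨diamW (Fin n → QuaternionGroup 2) Set.univ, Set.univ, Subgroup.closure_univ, rfl⟩
  refine csSup_le hne ?_
  rintro d ⟨X, hX, rfl⟩
  have h6 : diamW (Fin n → QuaternionGroup 2) X ≤ 6 * n := by
    refine csSup_le ⟨wLen X 1, 1, rfl⟩ ?_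
    rintro b ⟨g, rfl⟩
    exact Stmt19Aux.wLen_le hX g
  calc diamW (Fin n → QuaternionGroup 2) X ≤ 6 * n := h6
  _ ≤ 8 * n ^ 2 + 3 * n := by nlinarith
end
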